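/- The function f′ satisfies the recurrence f′(0) = 0, f′(1) = 1, and, for all i ≥ 1 and all j with 0 ≤ j ≤ 2^i − 1: f′(2^i + j) = f′(j) + 1 if j = 2^i − i − 1, and f′(2^i + j) = f′(j) otherwise. Moreover, f′(2^n − n) = f(n) for every n ≥ 1. -/

import Mathlib

/-- `f' n` is the number of integers `k ≥ 1` such that `n + k ≡ 0 (mod 2^k)`.
All such `k` satisfy `k ≤ n`, so this set is finite. -/
def f' (n : ℕ) : ℕ := ((Finset.Icc 1 n).filter (fun k => 2 ^ k ∣ (n + k))).card

/-- `f n` is the number of integers `k` with `1 ≤ k ≤ n` such that `k ≡ n (mod 2^k)`. -/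
def f (n : ℕ) : ℕ := ((Finset.Icc 1 n).filter (fun k => n % 2 ^ k = k % 2 ^ k)).card

lemma two_mul_le_two_pow' : ∀ k : ℕ, 1 ≤ k → 2 * k ≤ 2 ^ k := by
  intro k hk
  induction k with
  | zero => omega
  | succ m ih =>
    rcases Nat.eq_zero_or_pos m with h | h
    · subst h; norm_num
    · have h1 := ih h
      have h2 : (2:ℕ) ≤ 2 ^ m := by
        calc (2:ℕ) = 2 * 1 := by ring
        _ ≤ 2 * m := by omega
        _ ≤ 2 ^ m := h1
      have : (2:ℕ) ^ (m+1) = 2 ^ m + 2 ^ m := by ring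
      omega

lemma key (i j : ℕ) (hi : 1 ≤ i) (hj : j < 2 ^ i) (k : ℕ) :
    k ∈ (Finset.Icc 1 (2 ^ i + j)).filter (fun k => 2 ^ k ∣ (2 ^ i + j + k)) ↔
    (k ∈ (Finset.Icc 1 j).filter (fun k => 2 ^ k ∣ (j + k)) ∨
      (k = i + 1 ∧ j + (i + 1) = 2 ^ i)) := by
  have hi2 : i < 2 ^ i := Nat.lt_two_pow_self
  simp only [Finset.mem_filter, Finset.mem_Icc]
  constructor
  · rintro ⟨⟨h1, h2⟩, hd⟩
    have hk2 : 2 * k ≤ 2 ^ k := two_mul_le_two_pow' k h1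
    rcases le_or_gt k i with hik | hik
    · -- k ≤ i
      have hdvd2i : (2:ℕ) ^ k ∣ 2 ^ i := pow_dvd_pow 2 hik
      have hd' : (2:ℕ) ^ k ∣ j + k := by
        have := (Nat.dvd_add_right hdvd2i).mp (by rwa [add_assoc] at hd)
        exact this
      have hle : 2 ^ k ≤ j + k := Nat.le_of_dvd (by omega) hd'
      exact Or.inl ⟨⟨h1, by omega⟩, hd'⟩
    · rcases lt_or_ge (i + 1) k with hk' | hk'
      · -- k ≥ i + 2 : contradiction
        exfalso
        have hpk : (2:ℕ) ^ (i + 2) ≤ 2 ^ k := Nat.pow_le_pow_right (by norm_num) (by omega)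
        have hle : 2 ^ k ≤ 2 ^ i + j + k := Nat.le_of_dvd (by omega) hd
        have he : (2:ℕ) ^ (i + 2) = 4 * 2 ^ i := by ring
        omega
      · -- k = i + 1
        have hk : k = i + 1 := by omega
        subst hk
        have hle : 2 ^ (i + 1) ≤ 2 ^ i + j + (i + 1) := Nat.le_of_dvd (by omega) hd
        have he : (2:ℕ) ^ (i + 1) = 2 * 2 ^ i := by ring
        obtain ⟨c, hc⟩ := hd
        have h1c : 1 ≤ c := by
          rcases Nat.eq_zero_or_pos c with h | h
          · subst h; simp at hc
          · exact h
        have h2c : c < 2 := by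
          by_contra h
          push_neg at h
          have : (2:ℕ) ^ (i + 1) * 2 ≤ 2 ^ (i + 1) * c := Nat.mul_le_mul_left _ h
          omega
        have hc1 : c = 1 := by omega
        subst hc1
        simp at hc
        right
        exact ⟨rfl, by omega⟩
  · rintro (⟨⟨h1, h2⟩, hd⟩ | ⟨hk, hjj⟩)
    · have hk2 : 2 * k ≤ 2 ^ k := two_mul_le_two_pow' k h1
      have hle : 2 ^ k ≤ j + k := Nat.le_of_dvd (by omega) hd
      have hki : k ≤ i := by
        by_contra h
        push_neg at h
        have hpk : (2:ℕ) ^ (i + 1) ≤ 2 ^ k := Nat.pow_le_pow_right (by norm_num) (by omega)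
        have he : (2:ℕ) ^ (i + 1) = 2 * 2 ^ i := by ring
        omega
      refine ⟨⟨h1, by omega⟩, ?_⟩
      rw [add_assoc]
      exact (Nat.dvd_add_right (pow_dvd_pow 2 hki)).mpr hd
    · subst hk
      refine ⟨⟨by omega, by omega⟩, ?_⟩
      have he : 2 ^ i + j + (i + 1) = 2 ^ (i + 1) := by
        have : (2:ℕ) ^ (i + 1) = 2 * 2 ^ i := by ring
        omega
      rw [he]

theorem f'_recurrence :
    f' 0 = 0 ∧ f' 1 = 1 ∧
      (∀ i : ℕ, 1 ≤ i → ∀ j : ℕ, j ≤ 2 ^ i - 1 →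
        (j = 2 ^ i - i - 1 → f' (2 ^ i + j) = f' j + 1) ∧
        (j ≠ 2 ^ i - i - 1 → f' (2 ^ i + j) = f' j)) ∧
      ∀ n : ℕ, 1 ≤ n → f' (2 ^ n - n) = f n := by
  refine ⟨by decide, by decide, ?_, ?_⟩
  · intro i hi j hjle
    have hone : (1:ℕ) ≤ 2 ^ i := Nat.one_le_two_pow
    have hj : j < 2 ^ i := by omega
    have hi2 : i < 2 ^ i := Nat.lt_two_pow_self
    constructor
    · intro hjeq
      have hjj : j + (i + 1) = 2 ^ i := by omega
      have hset : (Finset.Icc 1 (2 ^ i + j)).filter (fun k => 2 ^ k ∣ (2 ^ i + j + k)) =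
          insert (i + 1) ((Finset.Icc 1 j).filter (fun k => 2 ^ k ∣ (j + k))) := by
        ext k
        rw [key i j hi hj k, Finset.mem_insert]
        simp [hjj]
        tauto
      have hnotmem : (i + 1) ∉ (Finset.Icc 1 j).filter (fun k => 2 ^ k ∣ (j + k)) := by
        simp only [Finset.mem_filter, Finset.mem_Icc]
        rintro ⟨-, hd⟩
        rw [hjj] at hd
        have := Nat.le_of_dvd (by positivity) hd
        have : (2:ℕ) ^ i < 2 ^ (i + 1) := by
          have : (2:ℕ) ^ (i+1) = 2 * 2 ^ i := by ring
          omega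
        omega
      show (Finset.filter _ _).card = (Finset.filter _ _).card + 1
      rw [hset, Finset.card_insert_of_notMem hnotmem]
    · intro hjne
      have hjj : j + (i + 1) ≠ 2 ^ i := by omega
      have hset : (Finset.Icc 1 (2 ^ i + j)).filter (fun k => 2 ^ k ∣ (2 ^ i + j + k)) =
          (Finset.Icc 1 j).filter (fun k => 2 ^ k ∣ (j + k)) := by
        ext k
        rw [key i j hi hj k]
        simp [hjj]
      show (Finset.filter _ _).card = (Finset.filter _ _).card
      rw [hset]
  · intro n hn
    have hn2 : 2 * n ≤ 2 ^ n := two_mul_le_two_pow' n hn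
    have hset : (Finset.Icc 1 (2 ^ n - n)).filter (fun k => 2 ^ k ∣ (2 ^ n - n + k)) =
        (Finset.Icc 1 n).filter (fun k => n % 2 ^ k = k % 2 ^ k) := by
      ext k
      simp only [Finset.mem_filter, Finset.mem_Icc]
      constructor
      · rintro ⟨⟨h1, h2⟩, hd⟩
        have hk2 : 2 * k ≤ 2 ^ k := two_mul_le_two_pow' k h1
        have hkn : k ≤ n := by
          by_contra h
          push_neg at h
          have hpk : (2:ℕ) ^ (n + 1) ≤ 2 ^ k := Nat.pow_le_pow_right (by norm_num) (by omega)
          have hle : 2 ^ k ≤ 2 ^ n - n + k := Nat.le_of_dvd (by omega) hd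
          have he : (2:ℕ) ^ (n + 1) = 2 * 2 ^ n := by ring
          omega
        have hdk : (2:ℕ) ^ k ∣ 2 ^ n := pow_dvd_pow 2 hkn
        rw [show 2 ^ n - n + k = 2 ^ n - (n - k) by omega] at hd
        have hsub : (2:ℕ) ^ k ∣ n - k := by
          have h3 := Nat.dvd_sub hdk hd
          rwa [show 2 ^ n - (2 ^ n - (n - k)) = n - k by omega] at h3
        exact ⟨⟨h1, hkn⟩, ((Nat.modEq_iff_dvd' hkn).mpr hsub).symm⟩
      · rintro ⟨⟨h1, hkn⟩, hmod⟩
        have hsub : (2:ℕ) ^ k ∣ n - k := (Nat.modEq_iff_dvd' hkn).mp hmod.symm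
        refine ⟨⟨h1, by omega⟩, ?_⟩
        rw [show 2 ^ n - n + k = 2 ^ n - (n - k) by omega]
        exact Nat.dvd_sub (pow_dvd_pow 2 hkn) hsub
    show (Finset.filter _ _).card = (Finset.filter _ _).card
    rw [hset]
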